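/- arXiv:2502.15408 — 4 statements merged into one kernel-verified Lean document; each statement's English description precedes it below -/
import Mathlib

section
/- For measurable spaces X_1, ..., X_k, the product-measure map m^k : P(X_1) × ... × P(X_k) → P(X_1 × ... × X_k) sending (μ_1, ..., μ_k) to the product measure μ_1 ⊗ ... ⊗ μ_k is measurable, where each space of probability measures P(X) carries the σ-algebra Σ_w generated by the evaluation maps μ ↦ μ(A) for measurable sets A. -/
open MeasureTheory ProbabilityTheory

/--  carries the σ-algebra Σ_w generated by the evaluation maps, i.e. the trace of
the σ-algebra on measures generated by evaluations. -/
instance probabilityMeasureMeasurableSpace {α : Type*} [MeasurableSpace α] :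
    MeasurableSpace (ProbabilityMeasure α) :=
  MeasurableSpace.comap (fun μ => (μ : Measure α)) inferInstance

lemma measurable_pm_coe {α : Type*} [MeasurableSpace α] :
    Measurable (fun μ : ProbabilityMeasure α => (μ : Measure α)) :=
  comap_measurable _

lemma measurable_into_pm {β α : Type*} [MeasurableSpace β] [MeasurableSpace α]
    {f : β → ProbabilityMeasure α}
    (h : Measurable (fun b => (f b : Measure α))) : Measurable f := by
  intro s hs
  obtain ⟨t, ht, rfl⟩ := hs
  exact h ht

lemma measurable_pi_apply_set {k : ℕ} {𝒳 : Fin k → Type*}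
    [∀ i, MeasurableSpace (𝒳 i)] {s : Set (∀ i, 𝒳 i)} (hs : MeasurableSet s) :
    Measurable (fun μ : ∀ i, ProbabilityMeasure (𝒳 i) =>
      Measure.pi (fun i => (μ i : Measure (𝒳 i))) s) := by
  refine MeasurableSpace.induction_on_inter (C := fun s _ => Measurable (fun μ : ∀ i, ProbabilityMeasure (𝒳 i) =>
      Measure.pi (fun i => (μ i : Measure (𝒳 i))) s))
    generateFrom_pi.symm isPiSystem_pi ?_ ?_ ?_ ?_ _ hs
  · simp
  · rintro t ⟨t, ht, rfl⟩
    have : (fun μ : ∀ i, ProbabilityMeasure (𝒳 i) =>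
        Measure.pi (fun i => (μ i : Measure (𝒳 i))) (Set.pi Set.univ t))
        = fun μ => ∏ i, (μ i : Measure (𝒳 i)) (t i) := by
      funext μ
      exact Measure.pi_pi _ _
    rw [this]
    refine Finset.measurable_prod _ fun i _ => ?_
    have hti : MeasurableSet (t i) := ht i (Set.mem_univ i)
    exact (Measure.measurable_coe hti).comp (measurable_pm_coe.comp (measurable_pi_apply i))
  · intro t ht ih
    have : (fun μ : ∀ i, ProbabilityMeasure (𝒳 i) =>
        Measure.pi (fun i => (μ i : Measure (𝒳 i))) tᶜ)
        = fun μ => 1 - Measure.pi (fun i => (μ i : Measure (𝒳 i))) t := by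
      funext μ
      rw [measure_compl ht (measure_ne_top _ _)]
      simp
    rw [this]
    exact measurable_const.sub ih
  · intro f hdisj hf ih
    have : (fun μ : ∀ i, ProbabilityMeasure (𝒳 i) =>
        Measure.pi (fun i => (μ i : Measure (𝒳 i))) (⋃ n, f n))
        = fun μ => ∑' n, Measure.pi (fun i => (μ i : Measure (𝒳 i))) (f n) := by
      funext μ
      exact measure_iUnion hdisj hf
    rw [this]
    exact Measurable.ennreal_tsum ih

/-- For measurable spaces `𝒳 1, ..., 𝒳 k`, the product-measure map
`P(𝒳 1) × ... × P(𝒳 k) → P(𝒳 1 × ... × 𝒳 k)` is measurable, where each space of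
probability measures carries the σ-algebra generated by the evaluation maps. -/
theorem product_measure_map_measurable {k : ℕ} {𝒳 : Fin k → Type*}
    [∀ i, MeasurableSpace (𝒳 i)] :
    Measurable (fun μ : ∀ i, ProbabilityMeasure (𝒳 i) =>
      (⟨Measure.pi fun i => (μ i : Measure (𝒳 i)), inferInstance⟩ :
        ProbabilityMeasure (∀ i, 𝒳 i))) := by
  apply measurable_into_pm
  rw [Measure.measurable_measure]
  intro s hs
  exact measurable_pi_apply_set hs
end

section
/- If q and q' are both Bayesian inversions of a Markov kernel p: X ⇝ Y relative to μ_X ∈ P(X), then q = q' (p_* μ_X)-almost everywhere: for every measurable B ⊆ X, q(B|·) = q'(B|·) outside a (p_* μ_X)-null set of Y. -/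
open MeasureTheory ProbabilityTheory

/-- The pushforward of a measure `ν` on `X` along the graph kernel
`Γ_T : x ↦ δ_x ⊗ T(·|x)` of a kernel `T : X ⇝ Y`. -/
noncomputable def graphJoint {X Y : Type*} [MeasurableSpace X] [MeasurableSpace Y]
    (ν : Measure X) (T : Kernel X Y) : Measure (X × Y) :=
  ν.bind (fun x => (Measure.dirac x).prod (T x))

/-- `q : Y ⇝ X` is a Bayesian inversion of `p : X ⇝ Y` relative to `μ ∈ P(X)`:
`σ_*((Γ_q)_*(p_* μ)) = (Γ_p)_* μ`, where `σ` swaps the factors and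
`p_* μ = μ.bind p`. -/
noncomputable def IsBayesianInversion {X Y : Type*} [MeasurableSpace X] [MeasurableSpace Y]
    (p : Kernel X Y) (μ : Measure X) (q : Kernel Y X) : Prop :=
  (graphJoint (μ.bind (p : X → Measure Y)) q).map Prod.swap = graphJoint μ p

lemma graphJoint_prod_apply {X Y : Type*} [MeasurableSpace X] [MeasurableSpace Y]
    (ν : Measure X) (T : Kernel X Y) [IsSFiniteKernel T]
    {A : Set X} (hA : MeasurableSet A) {B : Set Y} (hB : MeasurableSet B) :
    graphJoint ν T (A ×ˢ B) = ∫⁻ x in A, T x B ∂ν := by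
  have hmeas : Measurable fun x => (Measure.dirac x).prod (T x) := by
    have : (fun x => (Measure.dirac x).prod (T x)) = fun x => (Kernel.id ×ₖ T) x := by
      funext x
      rw [Kernel.prod_apply, Kernel.id_apply]
    rw [this]
    exact (Kernel.id ×ₖ T).measurable
  rw [graphJoint, Measure.bind_apply (hA.prod hB) hmeas.aemeasurable]
  have : ∀ x, (Measure.dirac x).prod (T x) (A ×ˢ B)
      = A.indicator (fun x => T x B) x := by
    intro x
    rw [Measure.prod_prod, Measure.dirac_apply' _ hA]
    by_cases hx : x ∈ A <;> simp [hx]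
  simp_rw [this]
  exact lintegral_indicator hA _

/-- If `q` and `q'` are both Bayesian inversions of `p : X ⇝ Y` relative to
`μ_X ∈ P(X)`, then `q = q'` `(p_* μ_X)`-almost everywhere. -/
theorem bayesianInversion_ae_unique {X Y : Type*}
    [MeasurableSpace X] [MeasurableSpace Y]
    (p : Kernel X Y) [IsMarkovKernel p] (μ : Measure X) [IsProbabilityMeasure μ]
    (q q' : Kernel Y X) [IsMarkovKernel q] [IsMarkovKernel q']
    (hq : IsBayesianInversion p μ q) (hq' : IsBayesianInversion p μ q') :
    ∀ B : Set X, MeasurableSet B →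
      ∀ᵐ y ∂(μ.bind (p : X → Measure Y)), q y B = q' y B := by
  intro B hB
  set ν := μ.bind (p : X → Measure Y) with hν
  have hνprob : IsProbabilityMeasure ν := by
    constructor
    rw [hν, Measure.bind_apply MeasurableSet.univ p.measurable.aemeasurable]
    simp
  have hjoint : graphJoint ν q = graphJoint ν q' := by
    have h := hq.trans hq'.symm
    have h2 := congrArg (Measure.map Prod.swap) h
    rwa [Measure.map_map measurable_swap measurable_swap,
      Measure.map_map measurable_swap measurable_swap,
      Prod.swap_swap_eq, Measure.map_id, Measure.map_id] at h2
  refine ae_eq_of_forall_setLIntegral_eq_of_sigmaFinite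
    (q.measurable_coe hB) (q'.measurable_coe hB) fun A hA _ => ?_
  rw [← graphJoint_prod_apply ν q hA hB, ← graphJoint_prod_apply ν q' hA hB, hjoint]
end

section
/- Composition of Bayesian inversions is a Bayesian inversion: let q_1: X_2 ⇝ X_1 be a Bayesian inversion of p_1: X_1 ⇝ X_2 relative to μ_1 ∈ P(X_1), and let q_2: X_3 ⇝ X_2 be a Bayesian inversion of p_2: X_2 ⇝ X_3 relative to (p_1)_* μ_1. Then q_1 ∘ q_2 : X_3 ⇝ X_1 is a Bayesian inversion of p_2 ∘ p_1 relative to μ_1. -/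
open MeasureTheory ProbabilityTheory

lemma isProbabilityMeasure_bind {X Y : Type*} [MeasurableSpace X] [MeasurableSpace Y]
    (μ : Measure X) [IsProbabilityMeasure μ] (p : Kernel X Y) [IsMarkovKernel p] :
    IsProbabilityMeasure (μ.bind (p : X → Measure Y)) := by
  constructor
  rw [Measure.bind_apply MeasurableSet.univ p.measurable.aemeasurable]
  simp

lemma graphJoint_eq {X Y : Type*} [MeasurableSpace X] [MeasurableSpace Y]
    (ν : Measure X) [SFinite ν] (T : Kernel X Y) [IsSFiniteKernel T] :
    graphJoint ν T = ν ⊗ₘ T := by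
  have h : (fun x => (Measure.dirac x).prod (T x)) = fun x => (Kernel.id ×ₖ T) x := by
    funext x; rw [Kernel.prod_apply, Kernel.id_apply]
  ext s hs
  rw [graphJoint, h, Measure.bind_apply hs (Kernel.id ×ₖ T).measurable.aemeasurable,
    Measure.compProd_apply hs]
  congr 1; funext x
  rw [Kernel.prod_apply, Kernel.id_apply, Measure.dirac_prod,
    Measure.map_apply measurable_prodMk_left hs]

/-- Composition of Bayesian inversions is a Bayesian inversion: if `q₁ : X₂ ⇝ X₁` is a
Bayesian inversion of `p₁ : X₁ ⇝ X₂` relative to `μ₁ ∈ P(X₁)` and `q₂ : X₃ ⇝ X₂` is a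
Bayesian inversion of `p₂ : X₂ ⇝ X₃` relative to `(p₁)_* μ₁`, then `q₁ ∘ q₂ : X₃ ⇝ X₁`
is a Bayesian inversion of `p₂ ∘ p₁` relative to `μ₁`. -/
theorem bayesianInversion_comp {X₁ X₂ X₃ : Type*}
    [MeasurableSpace X₁] [MeasurableSpace X₂] [MeasurableSpace X₃]
    (p₁ : Kernel X₁ X₂) [IsMarkovKernel p₁] (p₂ : Kernel X₂ X₃) [IsMarkovKernel p₂]
    (μ₁ : Measure X₁) [IsProbabilityMeasure μ₁]
    (q₁ : Kernel X₂ X₁) [IsMarkovKernel q₁] (q₂ : Kernel X₃ X₂) [IsMarkovKernel q₂]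
    (hq₁ : IsBayesianInversion p₁ μ₁ q₁)
    (hq₂ : IsBayesianInversion p₂ (μ₁.bind (p₁ : X₁ → Measure X₂)) q₂) :
    IsBayesianInversion (p₂ ∘ₖ p₁) μ₁ (q₁ ∘ₖ q₂) := by
  set ν₂ := μ₁.bind (p₁ : X₁ → Measure X₂) with hν₂
  have : IsProbabilityMeasure ν₂ := isProbabilityMeasure_bind μ₁ p₁
  set ν₃ := ν₂.bind (p₂ : X₂ → Measure X₃) with hν₃
  have : IsProbabilityMeasure ν₃ := isProbabilityMeasure_bind ν₂ p₂
  have hbind : μ₁.bind ((p₂ ∘ₖ p₁) : X₁ → Measure X₃) = ν₃ := by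
    rw [hν₃, hν₂, Measure.bind_bind p₁.measurable.aemeasurable p₂.measurable.aemeasurable]
    exact congrArg μ₁.bind (funext fun x => Kernel.comp_apply p₂ p₁ x)
  unfold IsBayesianInversion at hq₁ hq₂ ⊢
  rw [hbind]
  rw [show ν₂.bind (p₂ : X₂ → Measure X₃) = ν₃ from rfl] at hq₂
  rw [graphJoint_eq, graphJoint_eq] at hq₁ hq₂ ⊢
  rw [← hν₂] at hq₁
  have H2 : ∀ g : X₂ × X₃ → ENNReal, Measurable g →
      ∫⁻ z, ∫⁻ y, g (y, z) ∂(q₂ z) ∂ν₃ = ∫⁻ y, ∫⁻ z, g (y, z) ∂(p₂ y) ∂ν₂ := by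
    intro g hg
    have h := congrArg (fun m => ∫⁻ w, g w ∂m) hq₂
    rw [lintegral_map hg measurable_swap, Measure.lintegral_compProd (f := fun a => g a.swap) (hg.comp measurable_swap),
      Measure.lintegral_compProd hg] at h
    simpa using h
  have H1 : ∀ g : X₁ × X₂ → ENNReal, Measurable g →
      ∫⁻ y, ∫⁻ x, g (x, y) ∂(q₁ y) ∂ν₂ = ∫⁻ x, ∫⁻ y, g (x, y) ∂(p₁ x) ∂μ₁ := by
    intro g hg
    have h := congrArg (fun m => ∫⁻ w, g w ∂m) hq₁
    rw [lintegral_map hg measurable_swap, Measure.lintegral_compProd (f := fun a => g a.swap) (hg.comp measurable_swap),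
      Measure.lintegral_compProd hg] at h
    simpa using h
  have key : ∀ (A : Set X₁) (C : Set X₃), MeasurableSet A → MeasurableSet C →
      ((ν₃ ⊗ₘ (q₁ ∘ₖ q₂)).map Prod.swap) (A ×ˢ C) = (μ₁ ⊗ₘ (p₂ ∘ₖ p₁)) (A ×ˢ C) := by
    intro A C hA hC
    have hqA : Measurable fun y => q₁ y A := q₁.measurable_coe hA
    have hpC : Measurable fun y => p₂ y C := p₂.measurable_coe hC
    rw [Measure.map_apply measurable_swap (hA.prod hC), Set.preimage_swap_prod,
      Measure.compProd_apply_prod hC hA, Measure.compProd_apply_prod hA hC]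
    have e1 : ∫⁻ z in C, ((q₁ ∘ₖ q₂) z) A ∂ν₃
        = ∫⁻ z, ∫⁻ y, (C.indicator 1 z) * q₁ y A ∂(q₂ z) ∂ν₃ := by
      rw [← lintegral_indicator hC]
      refine lintegral_congr fun z => ?_
      rw [lintegral_const_mul _ hqA, ← Kernel.comp_apply' q₁ q₂ z hA]
      by_cases hz : z ∈ C <;> simp [hz]
    have e2 : ∫⁻ y, ∫⁻ z, (C.indicator 1 z) * q₁ y A ∂(p₂ y) ∂ν₂
        = ∫⁻ y, q₁ y A * p₂ y C ∂ν₂ := by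
      refine lintegral_congr fun y => ?_
      calc ∫⁻ z, (C.indicator 1 z) * q₁ y A ∂(p₂ y)
          = ∫⁻ z, q₁ y A * (C.indicator 1 z) ∂(p₂ y) := by
            refine lintegral_congr fun z => mul_comm _ _
        _ = q₁ y A * p₂ y C := by
            rw [lintegral_const_mul _ (measurable_one.indicator hC), lintegral_indicator_one hC]
    have e3 : ∫⁻ y, ∫⁻ x, (A.indicator 1 x) * p₂ y C ∂(q₁ y) ∂ν₂
        = ∫⁻ y, q₁ y A * p₂ y C ∂ν₂ := by
      refine lintegral_congr fun y => ?_
      calc ∫⁻ x, (A.indicator 1 x) * p₂ y C ∂(q₁ y)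
          = ∫⁻ x, p₂ y C * (A.indicator 1 x) ∂(q₁ y) := by
            refine lintegral_congr fun x => mul_comm _ _
        _ = p₂ y C * q₁ y A := by
            rw [lintegral_const_mul _ (measurable_one.indicator hA), lintegral_indicator_one hA]
        _ = q₁ y A * p₂ y C := mul_comm _ _
    have e4 : ∫⁻ x, ∫⁻ y, (A.indicator 1 x) * p₂ y C ∂(p₁ x) ∂μ₁
        = ∫⁻ x in A, ((p₂ ∘ₖ p₁) x) C ∂μ₁ := by
      rw [← lintegral_indicator hA]
      refine lintegral_congr fun x => ?_
      rw [lintegral_const_mul _ hpC, ← Kernel.comp_apply' p₂ p₁ x hC]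
      by_cases hx : x ∈ A <;> simp [hx]
    have hg2 : Measurable fun w : X₂ × X₃ => (C.indicator 1 w.2) * q₁ w.1 A :=
      ((measurable_one.indicator hC).comp measurable_snd).mul (hqA.comp measurable_fst)
    have hg1 : Measurable fun w : X₁ × X₂ => (A.indicator 1 w.1) * p₂ w.2 C :=
      ((measurable_one.indicator hA).comp measurable_fst).mul (hpC.comp measurable_snd)
    calc ∫⁻ z in C, ((q₁ ∘ₖ q₂) z) A ∂ν₃
        = ∫⁻ z, ∫⁻ y, (C.indicator 1 z) * q₁ y A ∂(q₂ z) ∂ν₃ := e1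
      _ = ∫⁻ y, ∫⁻ z, (C.indicator 1 z) * q₁ y A ∂(p₂ y) ∂ν₂ := H2 _ hg2
      _ = ∫⁻ y, q₁ y A * p₂ y C ∂ν₂ := e2
      _ = ∫⁻ y, ∫⁻ x, (A.indicator 1 x) * p₂ y C ∂(q₁ y) ∂ν₂ := e3.symm
      _ = ∫⁻ x, ∫⁻ y, (A.indicator 1 x) * p₂ y C ∂(p₁ x) ∂μ₁ := H1 _ hg1
      _ = ∫⁻ x in A, ((p₂ ∘ₖ p₁) x) C ∂μ₁ := e4
  refine ext_of_generate_finite _ generateFrom_prod.symm isPiSystem_prod ?_ ?_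
  · rintro s ⟨A, hA, C, hC, rfl⟩
    exact key A C hA hC
  · rw [← Set.univ_prod_univ]
    exact key _ _ MeasurableSet.univ MeasurableSet.univ
end

section
/- Let (Θ, μ_Θ) be a probability space, p: Θ ⇝ X a Markov kernel, κ: Θ → Θ_1 a measurable map, and p_1: Θ_1 ⇝ X a Markov kernel such that p = p_1 ∘ κ (where κ is regarded as a deterministic kernel). If q: X ⇝ Θ is a Bayesian inversion of p relative to μ_Θ, then κ ∘ q : X ⇝ Θ_1 (i.e., x ↦ κ_*(q(·|x))) is a Bayesian inversion of p_1 relative to κ_* μ_Θ. -/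
open MeasureTheory ProbabilityTheory

section Aux

open MeasureTheory

variable {α β γ : Type*} [MeasurableSpace α] [MeasurableSpace β] [MeasurableSpace γ]

lemma measure_map_bind (ν : Measure α) {f : α → Measure β} (hf : Measurable f)
    {g : β → γ} (hg : Measurable g) :
    (ν.bind f).map g = ν.bind (fun a => (f a).map g) := by
  rw [← Measure.bind_dirac_eq_map (ν.bind f) hg,
    Measure.bind_bind (g := fun b => Measure.dirac (g b)) hf.aemeasurable (Measure.measurable_dirac.comp hg).aemeasurable]
  exact congrArg _ (funext fun a => Measure.bind_dirac_eq_map _ hg)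

lemma measure_bind_map (ν : Measure α) {g : α → β} (hg : Measurable g)
    {f : β → Measure γ} (hf : Measurable f) :
    (ν.map g).bind f = ν.bind (fun a => f (g a)) := by
  rw [← Measure.bind_dirac_eq_map ν hg,
    Measure.bind_bind (f := fun a => Measure.dirac (g a)) (Measure.measurable_dirac.comp hg).aemeasurable hf.aemeasurable]
  exact congrArg _ (funext fun a => Measure.dirac_bind hf (g a))

lemma measurable_graphFun (T : Kernel α β) [IsSFiniteKernel T] :
    Measurable (fun x => (Measure.dirac x).prod (T x)) := by
  have h : (fun x => (Measure.dirac x).prod (T x)) = ⇑(Kernel.id ×ₖ T) := by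
    funext x
    rw [Kernel.prod_apply, Kernel.id_apply]
  rw [h]
  exact (Kernel.id ×ₖ T).measurable

end Aux


/-- Let `(Θ, μ_Θ)` be a probability space, `p : Θ ⇝ X` a Markov kernel, `κ : Θ → Θ₁`
measurable and `p₁ : Θ₁ ⇝ X` a Markov kernel with `p = p₁ ∘ κ` (with `κ` regarded as a
deterministic kernel). If `q : X ⇝ Θ` is a Bayesian inversion of `p` relative to `μ_Θ`,
then `κ ∘ q : X ⇝ Θ₁` is a Bayesian inversion of `p₁` relative to `κ_* μ_Θ`. -/


theorem bayesianInversion_pushforward {Θ Θ₁ X : Type*}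
    [MeasurableSpace Θ] [MeasurableSpace Θ₁] [MeasurableSpace X]
    (p : Kernel Θ X) [IsMarkovKernel p] (μΘ : Measure Θ) [IsProbabilityMeasure μΘ]
    (κ : Θ → Θ₁) (hκ : Measurable κ)
    (p₁ : Kernel Θ₁ X) [IsMarkovKernel p₁]
    (hfact : p = p₁ ∘ₖ Kernel.deterministic κ hκ)
    (q : Kernel X Θ) [IsMarkovKernel q]
    (hq : IsBayesianInversion p μΘ q) :
    IsBayesianInversion p₁ (μΘ.map κ) ((Kernel.deterministic κ hκ) ∘ₖ q) := by

  classical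
  unfold IsBayesianInversion graphJoint at hq ⊢
  have hpapply : ∀ θ, p θ = p₁ (κ θ) := by
    intro θ
    rw [hfact, Kernel.comp_deterministic_eq_comap, Kernel.comap_apply]
  have hdetq : ∀ x, (Kernel.deterministic κ hκ ∘ₖ q) x = (q x).map κ := by
    intro x
    rw [Kernel.deterministic_comp_eq_map, Kernel.map_apply _ hκ]
  -- prior pushforward identity
  have hbind : (μΘ.map κ).bind (p₁ : Θ₁ → Measure X) = μΘ.bind (p : Θ → Measure X) := by
    rw [measure_bind_map μΘ hκ p₁.measurable]
    exact congrArg _ (funext fun θ => (hpapply θ).symm)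
  rw [hbind]
  set ν := μΘ.bind (p : Θ → Measure X) with hν
  have h1 : (fun x => (Measure.dirac x).prod ((Kernel.deterministic κ hκ ∘ₖ q) x))
      = fun x => ((Measure.dirac x).prod (q x)).map (Prod.map id κ) := by
    funext x
    rw [hdetq x, ← Measure.map_prod_map _ _ measurable_id hκ, Measure.map_id]
  rw [h1, ← measure_map_bind ν (measurable_graphFun q) (measurable_id.prodMap hκ),
    Measure.map_map measurable_swap (measurable_id.prodMap hκ)]
  have h2 : (Prod.swap ∘ Prod.map (@id X) κ : X × Θ → Θ₁ × X)
      = (Prod.map κ id) ∘ Prod.swap := rfl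
  rw [h2, ← Measure.map_map (hκ.prodMap measurable_id) measurable_swap, hq,
    measure_map_bind μΘ (measurable_graphFun p) (hκ.prodMap measurable_id),
    measure_bind_map μΘ hκ (measurable_graphFun p₁)]
  refine congrArg _ (funext fun θ => ?_)
  rw [← Measure.map_prod_map _ _ hκ measurable_id, Measure.map_id,
    Measure.map_dirac' hκ, hpapply θ]
end
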